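/- Let F : ℝⁿ × ℝᵐ → ℝ ∪ {+∞} be a proper convex function, p(u) := inf_{x ∈ ℝⁿ} F(x, u), and assume p(0) is finite. Define the dual value τ_d := p**(0) = sup_{μ ∈ ℝᵐ} inf_{u ∈ ℝᵐ} (p(u) − ⟨μ, u⟩), and the generalized level-set value function v(τ) := inf{‖u‖ : u ∈ ℝᵐ, ∃ x ∈ ℝⁿ with F(x, u) ≤ τ}, where ‖·‖ is the Euclidean norm. Then τ_d = inf{τ ∈ ℝ : v(τ) = 0} and v(τ) = 0 for every τ > τ_d. -/

import Mathlib

open scoped RealInnerProductSpace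

private lemma ereal_le_coe_of_forall_pos {x : EReal} {c : ℝ}
    (h : ∀ δ : ℝ, 0 < δ → x ≤ ((c + δ : ℝ) : EReal)) : x ≤ (c : EReal) := by
  by_contra hc
  push_neg at hc
  obtain ⟨z, hz1, hz2⟩ := EReal.exists_between_coe_real hc
  have hcz : c < z := by exact_mod_cast hz1
  have h' := h (z - c) (by linarith)
  rw [show c + (z - c) = z by ring] at h'
  exact absurd (h'.trans_lt hz2) (lt_irrefl _)

private lemma epi_convex {n m : ℕ}
    (F : EuclideanSpace ℝ (Fin n) × EuclideanSpace ℝ (Fin m) → EReal)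
    (hFbot : ∀ z, F z ≠ ⊥)
    (hFconvex : ∀ z w : EuclideanSpace ℝ (Fin n) × EuclideanSpace ℝ (Fin m),
      ∀ θ : ℝ, 0 ≤ θ → θ ≤ 1 →
        F (θ • z + (1 - θ) • w) ≤ (θ : EReal) * F z + ((1 - θ : ℝ) : EReal) * F w)
    (p : EuclideanSpace ℝ (Fin m) → EReal)
    (hp : ∀ u, p u = ⨅ x : EuclideanSpace ℝ (Fin n), F (x, u)) :
    Convex ℝ {q : EuclideanSpace ℝ (Fin m) × ℝ | p q.1 ≤ (q.2 : EReal)} := by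
  rintro ⟨u, s⟩ hu ⟨w, t⟩ hw a b ha hb hab
  simp only [Set.mem_setOf_eq] at hu hw
  have hgoal : p (a • u + b • w) ≤ ((a * s + b * t : ℝ) : EReal) := by
    apply ereal_le_coe_of_forall_pos
    intro δ hδ
    obtain ⟨x, hx⟩ : ∃ x, F (x, u) < ((s + δ : ℝ) : EReal) := by
      have h1 : p u < ((s + δ : ℝ) : EReal) :=
        lt_of_le_of_lt hu (by exact_mod_cast lt_add_of_pos_right s hδ)
      rw [hp] at h1
      exact iInf_lt_iff.mp h1
    obtain ⟨y, hy⟩ : ∃ y, F (y, w) < ((t + δ : ℝ) : EReal) := by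
      have h1 : p w < ((t + δ : ℝ) : EReal) :=
        lt_of_le_of_lt hw (by exact_mod_cast lt_add_of_pos_right t hδ)
      rw [hp] at h1
      exact iInf_lt_iff.mp h1
    set r1 := (F (x, u)).toReal with hr1def
    set r2 := (F (y, w)).toReal with hr2def
    have hr1 : F (x, u) = (r1 : EReal) := (EReal.coe_toReal hx.ne_top (hFbot _)).symm
    have hr2 : F (y, w) = (r2 : EReal) := (EReal.coe_toReal hy.ne_top (hFbot _)).symm
    have hr1lt : r1 < s + δ := by rw [hr1] at hx; exact_mod_cast hx
    have hr2lt : r2 < t + δ := by rw [hr2] at hy; exact_mod_cast hy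
    have hcomb := hFconvex (x, u) (y, w) a ha (by linarith)
    rw [show (1 - a : ℝ) = b by linarith] at hcomb
    rw [hr1, hr2, ← EReal.coe_mul, ← EReal.coe_mul, ← EReal.coe_add] at hcomb
    have hle : p (a • u + b • w) ≤ F (a • (x, u) + b • (y, w)) := by
      rw [hp]
      have heq : a • (x, u) + b • (y, w) = (a • x + b • y, a • u + b • w) := by
        simp [Prod.ext_iff]
      rw [heq]
      exact iInf_le _ _
    refine (hle.trans hcomb).trans ?_
    have : a * r1 + b * r2 ≤ a * s + b * t + δ := by
      have h1 : a * r1 ≤ a * (s + δ) := mul_le_mul_of_nonneg_left hr1lt.le ha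
      have h2 : b * r2 ≤ b * (t + δ) := mul_le_mul_of_nonneg_left hr2lt.le hb
      nlinarith
    exact_mod_cast this
  simp only [Set.mem_setOf_eq, Prod.smul_mk, Prod.mk_add_mk, smul_eq_mul]
  exact hgoal

/-- **Duality of the value function root (general perturbation framework).**
Let `F : ℝⁿ × ℝᵐ → ℝ ∪ {+∞}` be a proper convex function (never `-∞`, somewhere finite),
`p(u) := inf_x F(x, u)` the perturbation function with `p(0)` finite, and
`τd := p**(0) = sup_μ inf_u (p(u) - ⟨μ, u⟩)` the dual value.  With the generalized
level-set value function `v(τ) := inf {‖u‖ : ∃ x, F(x, u) ≤ τ}` one has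
`τd = inf {τ ∈ ℝ : v(τ) = 0}` and `v(τ) = 0` for every `τ > τd`. -/
theorem value_function_root_duality_general {n m : ℕ}
    (F : EuclideanSpace ℝ (Fin n) × EuclideanSpace ℝ (Fin m) → EReal)
    (hFbot : ∀ z, F z ≠ ⊥)
    (hFproper : ∃ z, F z ≠ ⊤)
    (hFconvex : ∀ z w : EuclideanSpace ℝ (Fin n) × EuclideanSpace ℝ (Fin m),
      ∀ θ : ℝ, 0 ≤ θ → θ ≤ 1 →
        F (θ • z + (1 - θ) • w) ≤ (θ : EReal) * F z + ((1 - θ : ℝ) : EReal) * F w)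
    (p : EuclideanSpace ℝ (Fin m) → EReal)
    (hp : ∀ u, p u = ⨅ x : EuclideanSpace ℝ (Fin n), F (x, u))
    (hp0fin : p 0 ≠ ⊤ ∧ p 0 ≠ ⊥)
    (τd : EReal)
    (hτd : τd = ⨆ μ : EuclideanSpace ℝ (Fin m),
      ⨅ u : EuclideanSpace ℝ (Fin m), (p u - ((⟪μ, u⟫ : ℝ) : EReal)))
    (v : ℝ → EReal)
    (hv : ∀ τ : ℝ, v τ = sInf {y : EReal |
      ∃ u : EuclideanSpace ℝ (Fin m),
        (∃ x : EuclideanSpace ℝ (Fin n), F (x, u) ≤ (τ : EReal)) ∧ y = (‖u‖ : EReal)}) :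
    τd = sInf {t : EReal | ∃ τ : ℝ, t = (τ : EReal) ∧ v τ = 0} ∧
      ∀ τ : ℝ, τd < (τ : EReal) → v τ = 0 := by
  classical
  have hple : ∀ (x : EuclideanSpace ℝ (Fin n)) (u : EuclideanSpace ℝ (Fin m)),
      p u ≤ F (x, u) := fun x u => by rw [hp]; exact iInf_le _ x
  -- Part 2 (key): strong duality direction via Hahn–Banach separation
  have key : ∀ τ : ℝ, τd < (τ : EReal) → v τ = 0 := by
    intro τ hlt
    by_contra hvne
    have hv0 : (0 : EReal) ≤ v τ := by
      rw [hv]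
      refine le_sInf ?_
      rintro y ⟨u, -, rfl⟩
      exact_mod_cast norm_nonneg u
    have hpos : (0 : EReal) < v τ := hv0.lt_of_ne (Ne.symm hvne)
    obtain ⟨ε, hε1, hε2⟩ := EReal.exists_between_coe_real hpos
    have hε0 : 0 < ε := by exact_mod_cast hε1
    have hball : ∀ u : EuclideanSpace ℝ (Fin m), ‖u‖ < ε → (τ : EReal) ≤ p u := by
      intro u hu
      rw [hp]
      refine le_iInf fun x => ?_
      by_contra hFx
      push_neg at hFx
      have hmem : (‖u‖ : EReal) ∈ {y : EReal |
          ∃ u' : EuclideanSpace ℝ (Fin m),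
            (∃ x' : EuclideanSpace ℝ (Fin n), F (x', u') ≤ (τ : EReal)) ∧
              y = (‖u'‖ : EReal)} := ⟨u, ⟨x, hFx.le⟩, rfl⟩
      have h1 : v τ ≤ (‖u‖ : EReal) := by rw [hv]; exact sInf_le hmem
      have h2 : (ε : EReal) < (‖u‖ : EReal) := lt_of_lt_of_le hε2 h1
      exact absurd (by exact_mod_cast h2 : ε < ‖u‖) (not_lt.mpr hu.le)
    set A : Set (EuclideanSpace ℝ (Fin m) × ℝ) := Metric.ball 0 ε ×ˢ Set.Iio τ with hA
    set B : Set (EuclideanSpace ℝ (Fin m) × ℝ) := {q | p q.1 ≤ (q.2 : EReal)} with hB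
    have hAopen : IsOpen A := Metric.isOpen_ball.prod isOpen_Iio
    have hAconv : Convex ℝ A := (convex_ball 0 ε).prod (convex_Iio τ)
    have hBconv : Convex ℝ B := epi_convex F hFbot hFconvex p hp
    have hdisj : Disjoint A B := by
      rw [Set.disjoint_left]
      rintro ⟨u, t⟩ hqA hqB
      have h1 : ‖u‖ < ε := by simpa [mem_ball_zero_iff] using hqA.1
      have h2 : (τ : EReal) ≤ (t : EReal) := (hball u h1).trans hqB
      have h3 : t < τ := hqA.2
      exact absurd (by exact_mod_cast h2 : τ ≤ t) (not_le.mpr h3)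
    obtain ⟨f, α, hfA, hfB⟩ := geometric_hahn_banach_open hAconv hAopen hBconv hdisj
    set β : ℝ := f (0, 1) with hβ
    set g : EuclideanSpace ℝ (Fin m) → ℝ := fun u => f (u, 0) with hg
    have hsplit : ∀ (u : EuclideanSpace ℝ (Fin m)) (t : ℝ), f (u, t) = g u + t * β := by
      intro u t
      have h1 : (u, t) = (u, (0 : ℝ)) + t • ((0 : EuclideanSpace ℝ (Fin m)), (1 : ℝ)) := by
        simp [Prod.ext_iff]
      rw [h1, map_add, map_smul]
      simp [hg, hβ, smul_eq_mul]
    have hg0 : g 0 = 0 := by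
      have : ((0 : EuclideanSpace ℝ (Fin m)), (0 : ℝ)) = (0 : EuclideanSpace ℝ (Fin m) × ℝ) := rfl
      simp [hg, this]
    have htA : ∀ t : ℝ, t < τ → t * β < α := by
      intro t ht
      have hmem : ((0 : EuclideanSpace ℝ (Fin m)), t) ∈ A :=
        ⟨Metric.mem_ball_self hε0, ht⟩
      have := hfA _ hmem
      rwa [hsplit, hg0, zero_add] at this
    have hα0 : α ≤ (p 0).toReal * β := by
      have hmem : ((0 : EuclideanSpace ℝ (Fin m)), (p 0).toReal) ∈ B := by
        simp only [hB, Set.mem_setOf_eq]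
        rw [EReal.coe_toReal hp0fin.1 hp0fin.2]
      have := hfB _ hmem
      rwa [hsplit, hg0, zero_add] at this
    have hβpos : 0 < β := by
      rcases lt_trichotomy β 0 with hneg | hzero | hposs
      · have ht : min (τ - 1) (α / β - 1) < τ :=
          lt_of_le_of_lt (min_le_left _ _) (by linarith)
        have h1 := htA _ ht
        have h2 : min (τ - 1) (α / β - 1) ≤ α / β - 1 := min_le_right _ _
        have h3 : (α / β - 1) * β ≤ min (τ - 1) (α / β - 1) * β :=
          mul_le_mul_of_nonpos_right h2 hneg.le
        rw [sub_mul, div_mul_cancel₀ _ (ne_of_lt hneg), one_mul] at h3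
        linarith
      · have h1 := htA (τ - 1) (by linarith)
        rw [hzero, mul_zero] at h1
        rw [hzero, mul_zero] at hα0
        linarith
      · exact hposs
    have hτβ : τ * β ≤ α := by
      by_contra hcon
      push_neg at hcon
      have hd : α / β < τ := (div_lt_iff₀ hβpos).mpr hcon
      have ht : max (α / β) (τ - 1) < τ := max_lt hd (by linarith)
      have h1 := htA _ ht
      have h2 : α ≤ max (α / β) (τ - 1) * β := by
        have h3 := mul_le_mul_of_nonneg_right (le_max_left (α / β) (τ - 1)) hβpos.le
        rwa [div_mul_cancel₀ _ (ne_of_gt hβpos)] at h3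
      linarith
    have hpbot : ∀ u : EuclideanSpace ℝ (Fin m), p u ≠ ⊥ := by
      intro u hbot
      have hmem : (u, (α - g u) / β - 1) ∈ B := by
        simp only [hB, Set.mem_setOf_eq, hbot]
        exact bot_le
      have h1 := hfB _ hmem
      rw [hsplit] at h1
      have h2 : ((α - g u) / β - 1) * β = α - g u - β := by
        rw [sub_mul, div_mul_cancel₀ _ (ne_of_gt hβpos), one_mul]
      rw [h2] at h1
      linarith
    set φ : EuclideanSpace ℝ (Fin m) →L[ℝ] ℝ :=
      (-(1 / β)) • (f.comp (ContinuousLinearMap.inl ℝ (EuclideanSpace ℝ (Fin m)) ℝ)) with hφ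
    set μ := (InnerProductSpace.toDual ℝ (EuclideanSpace ℝ (Fin m))).symm φ with hμ
    have hinner : ∀ u : EuclideanSpace ℝ (Fin m), ⟪μ, u⟫ = -(1 / β) * g u := by
      intro u
      rw [hμ, InnerProductSpace.toDual_symm_apply]
      simp [hφ, hg, ContinuousLinearMap.comp_apply, smul_eq_mul]
    have hmain : ∀ u : EuclideanSpace ℝ (Fin m),
        (τ : EReal) ≤ p u - ((⟪μ, u⟫ : ℝ) : EReal) := by
      intro u
      rcases eq_or_ne (p u) ⊤ with htop | hne
      · rw [htop, EReal.top_sub_coe]; exact le_top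
      · set r := (p u).toReal with hr
        have hfin : p u = (r : EReal) := (EReal.coe_toReal hne (hpbot u)).symm
        have hmem : (u, r) ∈ B := by
          simp only [hB, Set.mem_setOf_eq]
          rw [hfin]
        have hαr := hfB _ hmem
        rw [hsplit] at hαr
        rw [hfin, hinner u, ← EReal.coe_sub]
        have h1 : τ * β ≤ (r + g u / β) * β := by
          rw [add_mul, div_mul_cancel₀ _ (ne_of_gt hβpos)]
          linarith
        have h2 : τ ≤ r + g u / β := le_of_mul_le_mul_right h1 hβpos
        have h3 : r - (-(1 / β) * g u) = r + g u / β := by ring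
        rw [h3]
        exact_mod_cast h2
    have hge : (τ : EReal) ≤ τd := by
      rw [hτd]
      exact le_iSup_of_le μ (le_iInf hmain)
    exact absurd hlt (not_lt.mpr hge)
  refine ⟨le_antisymm ?_ ?_, key⟩
  · -- weak duality: τd ≤ every root of v
    refine le_sInf ?_
    rintro t ⟨τ, rfl, hvτ⟩
    rw [hτd]
    refine iSup_le fun μ => ?_
    refine ereal_le_coe_of_forall_pos fun δ hδ => ?_
    set δ' := δ / (‖μ‖ + 1) with hδ'
    have hδ'pos : 0 < δ' := div_pos hδ (by positivity)
    have hlt : v τ < (δ' : EReal) := by rw [hvτ]; exact_mod_cast hδ'pos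
    rw [hv] at hlt
    obtain ⟨y, ⟨u, ⟨x, hFxu⟩, rfl⟩, hy⟩ := sInf_lt_iff.mp hlt
    have hu : ‖u‖ < δ' := by exact_mod_cast hy
    have hpu : p u ≤ (τ : EReal) := (hple x u).trans hFxu
    have step1 : (⨅ u' : EuclideanSpace ℝ (Fin m), (p u' - ((⟪μ, u'⟫ : ℝ) : EReal)))
        ≤ p u - ((⟪μ, u⟫ : ℝ) : EReal) := iInf_le _ u
    have step2 : p u - ((⟪μ, u⟫ : ℝ) : EReal) ≤ ((τ - ⟪μ, u⟫ : ℝ) : EReal) := by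
      rw [EReal.coe_sub, sub_eq_add_neg, sub_eq_add_neg]
      exact add_le_add_left hpu _
    have step3 : τ - ⟪μ, u⟫ ≤ τ + δ := by
      have h1 : |⟪μ, u⟫| ≤ ‖μ‖ * ‖u‖ := abs_real_inner_le_norm μ u
      have h2 : ‖μ‖ * ‖u‖ ≤ ‖μ‖ * δ' := mul_le_mul_of_nonneg_left hu.le (norm_nonneg μ)
      have h4 : δ' * (‖μ‖ + 1) = δ := div_mul_cancel₀ _ (by positivity)
      have h5 : ‖μ‖ * δ' ≤ δ := by nlinarith [hδ'pos.le]
      have h6 := neg_abs_le (⟪μ, u⟫ : ℝ)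
      linarith
    exact step1.trans (step2.trans (by exact_mod_cast step3))
  · -- sInf of roots ≤ τd, from key
    by_contra hcon
    push_neg at hcon
    obtain ⟨c, hc1, hc2⟩ := EReal.exists_between_coe_real hcon
    have hvc : v c = 0 := key c hc1
    have hle : sInf {t : EReal | ∃ τ : ℝ, t = (τ : EReal) ∧ v τ = 0} ≤ (c : EReal) :=
      sInf_le ⟨c, rfl, hvc⟩
    exact absurd (hle.trans_lt hc2) (lt_irrefl _)
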